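/- Let X be a nonnegative random variable with continuous cumulative distribution function F and finite mean μ = ∫₀^∞ (1 − F(x)) dx, and suppose X is symmetric about μ, i.e. F(μ + x) + F(μ − x) = 1 for all x ∈ ℝ. Then for every n ≥ 1 the means of the extreme order statistics satisfy μ_{n:n} − μ = μ − μ_{1:n}, and consequently the cumulative entropy equals the cumulative residual entropy: 𝓒𝓔(X) = 𝓔(X). -/

import Mathlib

open MeasureTheory ProbabilityTheory Set

/-- Let `X` be a nonnegative random variable with continuous cdf `F = cdf μ`
and finite mean `m = ∫₀^∞ (1 - F x) dx`, symmetric about its mean: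
`F (m + x) + F (m - x) = 1` for all real `x`.  Then for every `n ≥ 1` the means of the extreme
order statistics, `μ_{n:n} = ∫₀^∞ (1 - (F x)^n) dx` and `μ_{1:n} = ∫₀^∞ (1 - F x)^n dx`,
satisfy `μ_{n:n} - m = m - μ_{1:n}`, and the cumulative entropy equals the cumulative residual
entropy: `𝓒𝓔(X) = 𝓔(X)`. -/
theorem symm_order_stats_and_ce_eq_cre
    (μ : Measure ℝ) [IsProbabilityMeasure μ] (hnonneg : μ (Set.Iio 0) = 0)
    (hcont : Continuous (cdf μ))
    (hmean : IntegrableOn (fun x => 1 - cdf μ x) (Set.Ioi 0) volume)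
    (m : ℝ) (hm : m = ∫ x in Set.Ioi (0 : ℝ), (1 - cdf μ x))
    (hsym : ∀ x : ℝ, cdf μ (m + x) + cdf μ (m - x) = 1) :
    (∀ n : ℕ, 1 ≤ n →
        (∫ x in Set.Ioi (0 : ℝ), (1 - (cdf μ x) ^ n)) - m
          = m - ∫ x in Set.Ioi (0 : ℝ), (1 - cdf μ x) ^ n)
      ∧ -∫ x in Set.Ioi (0 : ℝ), cdf μ x * Real.log (cdf μ x)
          = -∫ x in Set.Ioi (0 : ℝ), (1 - cdf μ x) * Real.log (1 - cdf μ x) := by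
  set F : ℝ → ℝ := fun x => cdf μ x with hF
  -- F vanishes on negatives
  have hneg : ∀ x : ℝ, x < 0 → F x = 0 := by
    intro x hx
    have h1 : μ (Iic x) = 0 :=
      measure_mono_null (fun y hy => lt_of_le_of_lt hy hx) hnonneg
    simp [hF, cdf_eq_real, measureReal_def, h1]
  -- F 0 = 0 by continuity
  have hF0 : F 0 = 0 := by
    have h1 : Filter.Tendsto F (nhdsWithin 0 (Iio 0)) (nhds (F 0)) :=
      (hcont.tendsto 0).mono_left nhdsWithin_le_nhds
    have h2 : Filter.Tendsto F (nhdsWithin 0 (Iio 0)) (nhds 0) := by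
      refine Filter.Tendsto.congr' ?_ tendsto_const_nhds
      filter_upwards [self_mem_nhdsWithin] with x hx
      exact (hneg x hx).symm
    exact tendsto_nhds_unique h1 h2
  have hle0 : ∀ x : ℝ, x ≤ 0 → F x = 0 := by
    intro x hx
    rcases eq_or_lt_of_le hx with h | h
    · rw [h]; exact hF0
    · exact hneg x h
  -- m > 0
  have hFm : F m = 1 / 2 := by
    have := hsym 0
    simp only [add_zero, sub_zero] at this
    simp only [hF]; linarith
  have hmpos : 0 < m := by
    by_contra h
    push_neg at h
    rw [hle0 m h] at hFm; norm_num at hFm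
  -- reflection identity
  have hrefl : ∀ x : ℝ, F (2 * m - x) = 1 - F x := by
    intro x
    have := hsym (x - m)
    have e1 : m + (x - m) = x := by ring
    have e2 : m - (x - m) = 2 * m - x := by ring
    rw [e1, e2] at this
    simp only [hF]; linarith
  -- F = 1 above 2m
  have h2m : ∀ x : ℝ, 2 * m ≤ x → F x = 1 := by
    intro x hx
    have h1 : F (2 * m) = 1 := by
      have := hrefl 0
      simp only [sub_zero] at this
      rw [this, hF0]; ring
    have h2 : F (2 * m) ≤ F x := monotone_cdf μ hx
    have h3 : F x ≤ 1 := cdf_le_one μ x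
    linarith
  -- truncation lemma: an integrand vanishing beyond 2m
  have htrunc : ∀ h : ℝ → ℝ, (∀ x : ℝ, 2 * m ≤ x → h x = 0) →
      ∫ x in Set.Ioi (0 : ℝ), h x = ∫ x in (0 : ℝ)..(2 * m), h x := by
    intro h hh
    rw [intervalIntegral.integral_of_le (by linarith : (0:ℝ) ≤ 2 * m)]
    have h1 : ∫ x in Set.Ioi (0 : ℝ), h x
        = ∫ x in Set.Ioi (0 : ℝ), (Set.Ioc (0:ℝ) (2*m)).indicator h x := by
      refine setIntegral_congr_fun measurableSet_Ioi ?_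
      intro x hx
      by_cases hx2 : x ≤ 2 * m
      · rw [Set.indicator_of_mem (Set.mem_Ioc.mpr ⟨Set.mem_Ioi.mp hx, hx2⟩)]
      · rw [Set.indicator_of_notMem (fun hc => hx2 hc.2), hh x (le_of_not_ge hx2)]
    rw [h1, setIntegral_indicator measurableSet_Ioc]
    congr 1
    rw [Set.inter_eq_right.mpr]
    intro x hx; exact hx.1
  -- interval reflection lemma
  have hflip : ∀ h : ℝ → ℝ,
      ∫ x in (0 : ℝ)..(2 * m), h (2 * m - x) = ∫ x in (0 : ℝ)..(2 * m), h x := by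
    intro h
    have := intervalIntegral.integral_comp_sub_left (a := (0:ℝ)) (b := 2*m) h (2*m)
    simpa using this
  constructor
  · -- order statistics part
    intro n hn
    have hA : ∫ x in Set.Ioi (0 : ℝ), (1 - F x ^ n)
        = ∫ x in (0:ℝ)..(2*m), (1 - F x ^ n) := by
      refine htrunc _ ?_
      intro x hx; rw [h2m x hx]; simp
    have hB : ∫ x in Set.Ioi (0 : ℝ), (1 - F x) ^ n
        = ∫ x in (0:ℝ)..(2*m), F x ^ n := by
      rw [htrunc (fun x => (1 - F x) ^ n) (by
        intro x hx; beta_reduce; rw [h2m x hx]; simp [zero_pow (by omega : n ≠ 0)])]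
      rw [← hflip (fun x => (1 - F x) ^ n)]
      refine intervalIntegral.integral_congr ?_
      intro x _
      simp only [hrefl x]; ring
    have hcF : Continuous F := hcont
    have hsum : (∫ x in (0:ℝ)..(2*m), (1 - F x ^ n)) + ∫ x in (0:ℝ)..(2*m), F x ^ n
        = 2 * m := by
      rw [← intervalIntegral.integral_add (f := fun x => 1 - F x ^ n) (g := fun x => F x ^ n)
        ((continuous_const.sub (hcF.pow n)).intervalIntegrable _ _)
        ((hcF.pow n).intervalIntegrable _ _)]
      have : ∀ x : ℝ, (1 - F x ^ n) + F x ^ n = 1 := fun x => by ring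
      simp only [this]
      simp
    rw [hA, hB]
    linarith
  · -- entropy part
    have hCE : ∫ x in Set.Ioi (0 : ℝ), F x * Real.log (F x)
        = ∫ x in Set.Ioi (0 : ℝ), (1 - F x) * Real.log (1 - F x) := by
      rw [htrunc (fun x => F x * Real.log (F x)) (by
        intro x hx; beta_reduce; rw [h2m x hx]; simp),
        htrunc (fun x => (1 - F x) * Real.log (1 - F x)) (by
        intro x hx; beta_reduce; rw [h2m x hx]; simp)]
      rw [← hflip (fun x => F x * Real.log (F x))]
      refine intervalIntegral.integral_congr ?_
      intro x _
      simp only [hrefl x]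
    rw [hCE]
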